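/- Let 0 < q < 1 and let A be a unital *-algebra over ℂ containing elements α, β satisfying the SU_q(2) relations. Then the 2×2 matrix p over A with rows (α*α, qα*β) and (qβ*α, q²β*β) is a self-adjoint idempotent: p² = p and p* = p (where * on matrices is the conjugate-transpose using the *-operation of A). Moreover its entries can be rewritten as p = ((1 − a, −qb), (−qb*, q²a)) where a := ββ* and b := −α*β. -/
import Mathlib


open Matrix in
/-- In a unital `*`-algebra over `ℂ` with `α, β` satisfying the `SU_q(2)` relations, the
matrix `p = ((α*α, qα*β), (qβ*α, q²β*β))` is a self-adjoint idempotent, and its entries can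
be rewritten as `((1 − a, −qb), (−qb*, q²a))` with `a := ββ*`, `b := −α*β`. -/
theorem suq2_projector_two (q : ℝ) (hq0 : 0 < q) (hq1 : q < 1)
    (A : Type*) [Ring A] [StarRing A] [Algebra ℂ A] [StarModule ℂ A]
    (α β : A)
    (h1 : α * β = (q : ℂ) • (β * α))
    (h2 : α * star β = (q : ℂ) • (star β * α))
    (h3 : β * star β = star β * β)
    (h4 : star α * α + star β * β = 1)
    (h5 : α * star α + (q : ℂ) ^ 2 • (β * star β) = 1) :
    (!![star α * α, (q : ℂ) • (star α * β); (q : ℂ) • (star β * α),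
          (q : ℂ) ^ 2 • (star β * β)] : Matrix (Fin 2) (Fin 2) A) *
        !![star α * α, (q : ℂ) • (star α * β); (q : ℂ) • (star β * α),
          (q : ℂ) ^ 2 • (star β * β)] =
      !![star α * α, (q : ℂ) • (star α * β); (q : ℂ) • (star β * α),
          (q : ℂ) ^ 2 • (star β * β)] ∧
    (!![star α * α, (q : ℂ) • (star α * β); (q : ℂ) • (star β * α),
          (q : ℂ) ^ 2 • (star β * β)] : Matrix (Fin 2) (Fin 2) A)ᴴ =
      !![star α * α, (q : ℂ) • (star α * β); (q : ℂ) • (star β * α),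
          (q : ℂ) ^ 2 • (star β * β)] ∧
    (!![star α * α, (q : ℂ) • (star α * β); (q : ℂ) • (star β * α),
          (q : ℂ) ^ 2 • (star β * β)] : Matrix (Fin 2) (Fin 2) A) =
      !![1 - β * star β, -((q : ℂ) • (-(star α * β)));
         -((q : ℂ) • star (-(star α * β))), (q : ℂ) ^ 2 • (β * star β)] := by
  have hαα : α * star α = 1 - (q : ℂ) ^ 2 • (β * star β) := eq_sub_of_add_eq h5
  have key : ∀ x y : A, x * α * (star α * y) = x * y - (q : ℂ) ^ 2 • (x * (β * star β) * y) := by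
    intro x y
    rw [show x * α * (star α * y) = x * (α * star α) * y by noncomm_ring, hαα]
    simp [mul_sub, sub_mul, smul_mul_assoc, mul_smul_comm, mul_assoc]
  refine ⟨?_, ?_, ?_⟩
  · ext i j
    fin_cases i <;> fin_cases j <;>
      simp only [Matrix.mul_apply, Fin.sum_univ_two, Matrix.cons_val', Matrix.cons_val_zero,
        Matrix.cons_val_one, Matrix.head_cons, Matrix.empty_val', Matrix.cons_val_fin_one,
        Matrix.head_fin_const, Fin.isValue, Fin.zero_eta, Fin.mk_one, Matrix.of_apply,
        mul_smul_comm, smul_mul_assoc]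
    · rw [key (star α) α]
      simp only [smul_smul, mul_assoc, smul_mul_assoc, mul_smul_comm]
      module
    · rw [key (star α) β]
      simp only [smul_smul, mul_assoc, smul_mul_assoc, mul_smul_comm, smul_sub]
      module
    · rw [key (star β) α]
      simp only [smul_smul, mul_assoc, smul_mul_assoc, mul_smul_comm, smul_sub]
      module
    · rw [key (star β) β]
      simp only [smul_smul, mul_assoc, smul_mul_assoc, mul_smul_comm, smul_sub]
      module
  · ext i j
    fin_cases i <;> fin_cases j <;>
      simp [Matrix.conjTranspose_apply, star_smul, Complex.star_def, Complex.conj_ofReal,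
        mul_assoc]
  · have hαα' : star α * α = 1 - β * star β := by
      rw [h3]; exact eq_sub_of_add_eq h4
    ext i j
    fin_cases i <;> fin_cases j <;>
      simp [hαα', h3, star_smul, Complex.star_def, Complex.conj_ofReal]
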